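/- Let ν > -1 and let (z_k)_{k≥1} be positive reals with ∑_{k=1}^∞ 1/z_k² < ∞ such that Γ(ν+1) · h_ν(t²/4) = ∏_{k=1}^∞ (1 + t²/z_k²) for all t ∈ ℝ (i.e., the z_k are the zeros of z^{-ν}J_ν(z)). Then for every t ∈ ℝ, (t²/4) · h_{ν+1}(t²/4) = h_ν(t²/4) · ∫_0^∞ (1 − cos(tx)) · ( ∑_{k=1}^∞ z_k e^{-z_k x} ) dx. In Bessel notation this reads (t/2)·I_{ν+1}(t) = I_ν(t) · ∫_0^∞ (1 − cos tx)(∑_k z_k e^{-z_k x}) dx. -/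

import Mathlib

open MeasureTheory

/-- Characteristic function of a measure on ℝ: `t ↦ ∫ e^{itx} dμ(x)`. -/
noncomputable def charFn (μ : Measure ℝ) (t : ℝ) : ℂ :=
  ∫ x, Complex.exp (t * x * Complex.I) ∂μ

/-- `h_ν(u) = ∑_{k=0}^∞ u^k / (k! Γ(ν+k+1))`. -/
noncomputable def hnu (ν : ℝ) (u : ℝ) : ℝ :=
  ∑' k : ℕ, u ^ k / (Nat.factorial k * Real.Gamma (ν + k + 1))

/-- `B_ν(t) = 1/(Γ(ν+1) h_ν(t²/4)) = t^ν/(2^ν Γ(ν+1) I_ν(t))`. -/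
noncomputable def Bnu (ν : ℝ) (t : ℝ) : ℝ :=
  1 / (Real.Gamma (ν + 1) * hnu ν (t ^ 2 / 4))

/-- `b_ν(t) = exp(−(t²/2)·h_{ν+1}(t²/4)/h_ν(t²/4)) = exp(−t·I_{ν+1}(t)/I_ν(t))`. -/
noncomputable def bnu (ν : ℝ) (t : ℝ) : ℝ :=
  Real.exp (-(t ^ 2 / 2) * hnu (ν + 1) (t ^ 2 / 4) / hnu ν (t ^ 2 / 4))

/-- The `n`-fold convolution power of a measure on ℝ. -/
noncomputable def convPow (ρ : Measure ℝ) : ℕ → Measure ℝ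
  | 0 => Measure.dirac 0
  | n + 1 => (convPow ρ n).conv ρ

/-- A probability measure on ℝ is infinitely divisible if for every `n ≥ 1` it is the
`n`-fold convolution of some probability measure. -/
def InfDivisible (μ : Measure ℝ) : Prop :=
  ∀ n : ℕ, 1 ≤ n → ∃ ρ : Measure ℝ, IsProbabilityMeasure ρ ∧ convPow ρ n = μ

section Aux

open Filter Real Set

lemma gammaPosAux {σ : ℝ} (hσ : -1 < σ) (k : ℕ) : 0 < Real.Gamma (σ + k + 1) := by
  apply Real.Gamma_pos_of_pos
  have : (0:ℝ) ≤ (k:ℝ) := Nat.cast_nonneg k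
  linarith

lemma summableGammaAux {σ : ℝ} (hσ : -1 < σ) {C : ℝ} (hC : 0 ≤ C) :
    Summable (fun k : ℕ => C ^ k / (Nat.factorial k * Real.Gamma (σ + k + 1))) := by
  apply summable_of_ratio_norm_eventually_le (r := 1/2) (by norm_num)
  have hten : Tendsto (fun k : ℕ => C / (((k:ℝ) + 1) * (σ + k + 1))) atTop (nhds 0) := by
    apply Tendsto.div_atTop tendsto_const_nhds
    apply Filter.Tendsto.atTop_mul_atTop₀
    · exact tendsto_atTop_add_const_right _ 1 tendsto_natCast_atTop_atTop
    · exact (tendsto_atTop_add_const_right _ (σ + 1) tendsto_natCast_atTop_atTop).congr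
        fun k => by ring
  filter_upwards [hten.eventually (eventually_le_nhds (by norm_num : (0:ℝ) < 1/2))] with k hk
  have hΓ : 0 < Real.Gamma (σ + k + 1) := gammaPosAux hσ k
  have hΓ' : 0 < Real.Gamma (σ + (k+1:ℕ) + 1) := gammaPosAux hσ (k+1)
  have hfac : (0:ℝ) < Nat.factorial k := by positivity
  have hpos : (0:ℝ) < σ + k + 1 := by
    have : (0:ℝ) ≤ (k:ℝ) := Nat.cast_nonneg k
    linarith
  have hΓeq : Real.Gamma (σ + (k+1:ℕ) + 1) = (σ + k + 1) * Real.Gamma (σ + k + 1) := by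
    have h1 : σ + ((k:ℝ)+1) + 1 = (σ + k + 1) + 1 := by ring
    push_cast
    rw [h1, Real.Gamma_add_one (ne_of_gt hpos)]
  have heq : C ^ (k+1) / (Nat.factorial (k+1) * Real.Gamma (σ + (k+1:ℕ) + 1))
      = (C / (((k:ℝ) + 1) * (σ + k + 1))) * (C ^ k / (Nat.factorial k * Real.Gamma (σ + k + 1))) := by
    rw [hΓeq, Nat.factorial_succ]
    push_cast
    field_simp
    ring
  rw [Real.norm_eq_abs, Real.norm_eq_abs, abs_of_nonneg (by positivity),
    abs_of_nonneg (by positivity), heq]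
  have h2 : 0 ≤ C ^ k / (Nat.factorial k * Real.Gamma (σ + k + 1)) := by positivity
  exact mul_le_mul_of_nonneg_right hk h2

lemma hasDerivAt_hnu_sq {ν : ℝ} (hν : -1 < ν) (t : ℝ) :
    HasDerivAt (fun s : ℝ => hnu ν (s^2/4)) (t/2 * hnu (ν+1) (t^2/4)) t := by
  set R : ℝ := |t| + 1 with hR
  have hRpos : 0 < R := by positivity
  set g' : ℕ → ℝ → ℝ := fun k s =>
    ((k : ℝ) * (s^2/4)^(k-1) * (s/2)) / (Nat.factorial k * Real.Gamma (ν + k + 1)) with hg'def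
  set u : ℕ → ℝ := fun k =>
    ((k : ℝ) * (R^2/4)^(k-1) * (R/2)) / (Nat.factorial k * Real.Gamma (ν + k + 1)) with hudef
  have hshift : ∀ (s : ℝ) (k : ℕ), ((k+1 : ℕ) : ℝ) * (s^2/4)^((k+1)-1) * (s/2)
      / (Nat.factorial (k+1) * Real.Gamma (ν + (k+1:ℕ) + 1))
      = (s/2) * ((s^2/4)^k / (Nat.factorial k * Real.Gamma ((ν+1) + k + 1))) := by
    intro s k
    have hpos : (0:ℝ) < ν + k + 1 := by
      have : (0:ℝ) ≤ (k:ℝ) := Nat.cast_nonneg k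
      linarith
    have hΓeq : Real.Gamma (ν + (k+1:ℕ) + 1) = (ν + k + 1) * Real.Gamma (ν + k + 1) := by
      have h1 : ν + ((k:ℝ)+1) + 1 = (ν + k + 1) + 1 := by ring
      push_cast
      rw [h1, Real.Gamma_add_one (ne_of_gt hpos)]
    have hΓeq2 : Real.Gamma ((ν+1) + k + 1) = (ν + k + 1) * Real.Gamma (ν + k + 1) := by
      have h1 : (ν+1) + (k:ℝ) + 1 = (ν + k + 1) + 1 := by ring
      rw [h1, Real.Gamma_add_one (ne_of_gt hpos)]
    have hΓ : 0 < Real.Gamma (ν + k + 1) := gammaPosAux hν k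
    have hfac : (0:ℝ) < Nat.factorial k := by positivity
    rw [hΓeq, hΓeq2, Nat.factorial_succ, Nat.add_sub_cancel]
    push_cast
    field_simp
  have hu : Summable u := by
    rw [← summable_nat_add_iff 1]
    have : (fun k : ℕ => u (k+1)) = fun k : ℕ =>
        (R/2) * ((R^2/4)^k / (Nat.factorial k * Real.Gamma ((ν+1) + k + 1))) := by
      funext k
      exact hshift R k
    rw [this]
    exact (summableGammaAux (by linarith : (-1:ℝ) < ν + 1)
      (by positivity : (0:ℝ) ≤ R^2/4)).mul_left _
  have hg : ∀ (k : ℕ) (s : ℝ), s ∈ Metric.ball (0:ℝ) R →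
      HasDerivAt (fun s : ℝ => (s^2/4)^k / (Nat.factorial k * Real.Gamma (ν + k + 1)))
        (g' k s) s := by
    intro k s _
    have h2 : HasDerivAt (fun s : ℝ => s^2/4) (s/2) s := by
      have h := (hasDerivAt_pow 2 s).div_const 4
      refine h.congr_deriv ?_
      push_cast
      ring
    exact (h2.pow k).div_const _
  have hbound : ∀ (k : ℕ) (s : ℝ), s ∈ Metric.ball (0:ℝ) R → ‖g' k s‖ ≤ u k := by
    intro k s hs
    rw [mem_ball_zero_iff, Real.norm_eq_abs] at hs
    have habs : |s| ≤ R := hs.le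
    have hsq : s^2/4 ≤ R^2/4 := by nlinarith [abs_nonneg s, sq_abs s, sq_abs R, abs_of_pos hRpos]
    have hΓ : 0 < Real.Gamma (ν + k + 1) := gammaPosAux hν k
    have hfac : (0:ℝ) < Nat.factorial k := by positivity
    have hnum : |(k:ℝ) * (s^2/4)^(k-1) * (s/2)| ≤ (k:ℝ) * (R^2/4)^(k-1) * (R/2) := by
      rw [abs_mul, abs_mul, Nat.abs_cast, abs_pow, abs_of_nonneg (by positivity : (0:ℝ) ≤ s^2/4)]
      have h1 : |s/2| ≤ R/2 := by
        rw [abs_div]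
        simp only [abs_two]
        gcongr
      gcongr
    simp only [hg'def, hudef]
    rw [Real.norm_eq_abs, abs_div, abs_of_pos (mul_pos hfac hΓ)]
    exact (div_le_div_iff_of_pos_right (mul_pos hfac hΓ)).mpr hnum
  have hg0 : Summable (fun k : ℕ => (t^2/4)^k / (Nat.factorial k * Real.Gamma (ν + k + 1))) :=
    summableGammaAux hν (by positivity)
  have htmem : t ∈ Metric.ball (0:ℝ) R := by
    rw [mem_ball_zero_iff, Real.norm_eq_abs]; linarith
  have key := hasDerivAt_tsum_of_isPreconnected hu Metric.isOpen_ball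
    ((convex_ball (0:ℝ) R).isPreconnected) hg hbound htmem hg0 htmem
  have hsum' : Summable (fun k => g' k t) :=
    Summable.of_norm_bounded hu (fun k => hbound k t htmem)
  have hval : (∑' k, g' k t) = t/2 * hnu (ν+1) (t^2/4) := by
    rw [hsum'.tsum_eq_zero_add]
    have h0 : g' 0 t = 0 := by simp [hg'def]
    rw [h0, zero_add, hnu, ← tsum_mul_left]
    exact tsum_congr fun k => hshift t k
  rw [hval] at key
  exact key

variable {z : ℕ → ℝ}

lemma summableLogAux (hz : ∀ k, 0 < z k) (hsum : Summable fun k => 1 / z k ^ 2) (s : ℝ) :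
    Summable fun k : ℕ => Real.log (1 + s^2 / z k ^ 2) := by
  have hzk : ∀ k, (0:ℝ) < 1 + s^2 / z k ^2 := fun k => by
    have := (hz k); positivity
  apply Summable.of_nonneg_of_le
    (fun k => Real.log_nonneg (by
      have h := hz k
      have : (0:ℝ) ≤ s^2 / z k ^2 := by positivity
      linarith))
    (fun k => by
      have h := Real.log_le_sub_one_of_pos (hzk k)
      linarith)
  exact (hsum.mul_left (s^2)).congr fun k => (mul_one_div _ _)

lemma hasDerivAt_logSeries (hz : ∀ k, 0 < z k) (hsum : Summable fun k => 1 / z k ^ 2) (t : ℝ) :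
    HasDerivAt (fun s : ℝ => ∑' k : ℕ, Real.log (1 + s^2 / z k ^ 2))
      (∑' k : ℕ, 2 * t / (z k ^ 2 + t ^ 2)) t := by
  set R : ℝ := |t| + 1 with hR
  have hRpos : 0 < R := by positivity
  set g' : ℕ → ℝ → ℝ := fun k s => 2 * s / (z k ^ 2 + s ^ 2) with hg'def
  have hg : ∀ (k : ℕ) (s : ℝ), s ∈ Metric.ball (0:ℝ) R →
      HasDerivAt (fun s : ℝ => Real.log (1 + s^2 / z k ^ 2)) (g' k s) s := by
    intro k s _
    have hzk := hz k
    have hpos : (0:ℝ) < 1 + s^2 / z k ^2 := by positivity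
    have hinner : HasDerivAt (fun s : ℝ => 1 + s^2 / z k ^ 2) (2 * s / z k ^ 2) s := by
      have h := ((hasDerivAt_pow 2 s).div_const (z k ^ 2)).const_add 1
      refine h.congr_deriv ?_
      push_cast
      ring
    have h := hinner.log (ne_of_gt hpos)
    convert h using 1
    rw [hg'def]
    field_simp
  have hbound : ∀ (k : ℕ) (s : ℝ), s ∈ Metric.ball (0:ℝ) R → ‖g' k s‖ ≤ 2 * R / z k ^ 2 := by
    intro k s hs
    rw [mem_ball_zero_iff, Real.norm_eq_abs] at hs
    have hzk := hz k
    rw [Real.norm_eq_abs, hg'def, abs_div, abs_of_pos (by positivity : (0:ℝ) < z k ^2 + s^2),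
      abs_mul, abs_two]
    calc 2 * |s| / (z k ^ 2 + s ^ 2) ≤ 2 * R / (z k ^2 + s^2) := by gcongr
      _ ≤ 2 * R / z k ^ 2 := by gcongr; nlinarith [sq_nonneg s]
  have hu : Summable (fun k => 2 * R / z k ^ 2) :=
    (hsum.mul_left (2*R)).congr fun k => (mul_one_div _ _)
  have htmem : t ∈ Metric.ball (0:ℝ) R := by
    rw [mem_ball_zero_iff, Real.norm_eq_abs]; linarith
  exact hasDerivAt_tsum_of_isPreconnected hu Metric.isOpen_ball
    ((convex_ball (0:ℝ) R).isPreconnected) hg hbound htmem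
    (summableLogAux hz hsum t) htmem

lemma integrableAux (t : ℝ) {c : ℝ} (hc : 0 < c) :
    IntegrableOn (fun x => (1 - Real.cos (t*x)) * (c * Real.exp (-c*x))) (Set.Ioi (0:ℝ)) := by
  have hbase : IntegrableOn (fun x => Real.exp (-c*x)) (Set.Ioi (0:ℝ)) :=
    exp_neg_integrableOn_Ioi 0 hc
  apply Integrable.mono' (hbase.const_mul (2*c))
  · exact ((continuous_const.sub (Real.continuous_cos.comp
      (continuous_const.mul continuous_id))).mul (continuous_const.mul
      (Real.continuous_exp.comp (continuous_const.mul continuous_id)))).aestronglyMeasurable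
  · filter_upwards with x
    rw [Real.norm_eq_abs, abs_mul, abs_mul]
    have h1 : |1 - Real.cos (t*x)| ≤ 2 := by
      have := Real.neg_one_le_cos (t*x)
      have := Real.cos_le_one (t*x)
      rw [abs_le]; constructor <;> linarith
    rw [abs_of_pos hc, abs_of_pos (Real.exp_pos _)]
    calc |1 - Real.cos (t*x)| * (c * Real.exp (-c*x)) ≤ 2 * (c * Real.exp (-c*x)) :=
          mul_le_mul_of_nonneg_right h1 (by positivity)
      _ = 2 * c * Real.exp (-c*x) := by ring

lemma integralAux (t : ℝ) {c : ℝ} (hc : 0 < c) :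
    ∫ x in Set.Ioi (0:ℝ), (1 - Real.cos (t*x)) * (c * Real.exp (-c*x)) = t^2/(c^2+t^2) := by
  have hd : (0:ℝ) < c^2 + t^2 := by positivity
  set f : ℝ → ℝ := fun x => -Real.exp (-c*x)
    + Real.exp (-c*x) * (c^2 * Real.cos (t*x) - t*c*Real.sin (t*x)) / (c^2+t^2) with hfdef
  have hderiv : ∀ x ∈ Set.Ici (0:ℝ),
      HasDerivAt f ((1 - Real.cos (t*x)) * (c * Real.exp (-c*x))) x := by
    intro x _
    have hlin1 : HasDerivAt (fun x : ℝ => -c*x) (-c) x := by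
      have h := (hasDerivAt_id x).const_mul (-c); rwa [mul_one] at h
    have hlin2 : HasDerivAt (fun x : ℝ => t*x) t x := by
      have h := (hasDerivAt_id x).const_mul t; rwa [mul_one] at h
    have he : HasDerivAt (fun x : ℝ => Real.exp (-c*x)) (Real.exp (-c*x) * (-c)) x :=
      hlin1.exp
    have hcos : HasDerivAt (fun x : ℝ => Real.cos (t*x)) (-Real.sin (t*x) * t) x :=
      hlin2.cos
    have hsin : HasDerivAt (fun x : ℝ => Real.sin (t*x)) (Real.cos (t*x) * t) x :=
      hlin2.sin
    have h := (he.neg).add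
      ((he.mul ((hcos.const_mul (c^2)).sub (hsin.const_mul (t*c)))).div_const (c^2+t^2))
    refine h.congr_deriv ?_
    simp only [Pi.sub_apply]
    field_simp
    ring
  have hint : IntegrableOn (fun x => (1 - Real.cos (t*x)) * (c * Real.exp (-c*x)))
      (Set.Ioi (0:ℝ)) := integrableAux t hc
  have hlim : Tendsto f atTop (nhds 0) := by
    apply squeeze_zero_norm (a := fun x => (1 + (c^2 + |t| * c)/(c^2+t^2)) * Real.exp (-c*x))
    · intro x
      have he := Real.exp_pos (-c*x)
      have hA : |c^2 * Real.cos (t*x) - t*c*Real.sin (t*x)| ≤ c^2 + |t| * c := by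
        have h1 : |Real.cos (t*x)| ≤ 1 := Real.abs_cos_le_one _
        have h2 : |Real.sin (t*x)| ≤ 1 := Real.abs_sin_le_one _
        calc |c^2 * Real.cos (t*x) - t*c*Real.sin (t*x)|
            ≤ |c^2 * Real.cos (t*x)| + |t*c*Real.sin (t*x)| := abs_sub _ _
          _ ≤ c^2 + |t| * c := by
              rw [abs_mul, abs_mul, abs_mul]
              rw [abs_of_pos (by positivity : (0:ℝ) < c^2), abs_of_pos hc]
              nlinarith [mul_le_mul_of_nonneg_left h1 (sq_nonneg c),
                mul_le_mul_of_nonneg_left h2 (mul_nonneg (abs_nonneg t) hc.le)]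
      have hfx : f x = (-1 + (c^2 * Real.cos (t*x) - t*c*Real.sin (t*x))/(c^2+t^2))
          * Real.exp (-c*x) := by rw [hfdef]; ring
      rw [hfx, Real.norm_eq_abs, abs_mul, abs_of_pos he]
      apply mul_le_mul_of_nonneg_right _ he.le
      calc |(-1 + (c^2 * Real.cos (t*x) - t*c*Real.sin (t*x))/(c^2+t^2))|
          ≤ |(-1 : ℝ)| + |(c^2 * Real.cos (t*x) - t*c*Real.sin (t*x))/(c^2+t^2)| := abs_add_le _ _
        _ ≤ 1 + (c^2 + |t| * c)/(c^2+t^2) := by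
            rw [abs_neg, abs_one, abs_div, abs_of_pos hd]
            gcongr
    · have h1 : Tendsto (fun x : ℝ => Real.exp (-c*x)) atTop (nhds 0) := by
        have h2 : Tendsto (fun x : ℝ => c*x) atTop atTop :=
          Tendsto.const_mul_atTop hc tendsto_id
        have h3 := Real.tendsto_exp_neg_atTop_nhds_zero.comp h2
        apply h3.congr
        intro x
        simp [Function.comp, neg_mul]
      simpa using h1.const_mul (1 + (c^2 + |t| * c)/(c^2+t^2))
  have key := integral_Ioi_of_hasDerivAt_of_tendsto' hderiv hint hlim
  rw [key, hfdef]
  simp only [mul_zero, Real.exp_zero, Real.cos_zero, Real.sin_zero]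
  field_simp
  ring

end Aux

open Filter in
theorem stmt8 (ν : ℝ) (hν : -1 < ν) (z : ℕ → ℝ) (hz : ∀ k, 0 < z k)
    (hsum : Summable fun k => 1 / z k ^ 2)
    (hfact : ∀ t : ℝ,
      Real.Gamma (ν + 1) * hnu ν (t ^ 2 / 4) = ∏' k : ℕ, (1 + t ^ 2 / z k ^ 2))
    (t : ℝ) :
    t ^ 2 / 4 * hnu (ν + 1) (t ^ 2 / 4) =
      hnu ν (t ^ 2 / 4) *
        ∫ x in Set.Ioi (0 : ℝ),
          (1 - Real.cos (t * x)) * ∑' k : ℕ, z k * Real.exp (-z k * x) := by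
  have hΓpos : 0 < Real.Gamma (ν + 1) := Real.Gamma_pos_of_pos (by linarith)
  -- Derivative / series identity
  have hGd : HasDerivAt (fun s : ℝ => Real.Gamma (ν+1) * hnu ν (s^2/4))
      (Real.Gamma (ν+1) * (t/2 * hnu (ν+1) (t^2/4))) t :=
    (hasDerivAt_hnu_sq hν t).const_mul _
  have hL := hasDerivAt_logSeries hz hsum t
  have hfun : (fun s : ℝ => Real.Gamma (ν+1) * hnu ν (s^2/4))
      = fun s : ℝ => Real.exp (∑' k : ℕ, Real.log (1 + s^2 / z k ^ 2)) := by
    funext s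
    rw [hfact s]
    have h := Real.rexp_tsum_eq_tprod (f := fun k => 1 + s^2 / z k ^2)
      (fun k => by have := hz k; positivity) (summableLogAux hz hsum s)
    exact h.symm
  have hPd : HasDerivAt (fun s : ℝ => Real.Gamma (ν+1) * hnu ν (s^2/4))
      (Real.exp (∑' k : ℕ, Real.log (1 + t^2 / z k ^ 2))
        * (∑' k : ℕ, 2 * t / (z k ^ 2 + t ^ 2))) t := by
    rw [hfun]
    exact hL.exp
  have heq0 := hGd.unique hPd
  have hLt : Real.exp (∑' k : ℕ, Real.log (1 + t^2 / z k ^ 2))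
      = Real.Gamma (ν+1) * hnu ν (t^2/4) := (congrFun hfun t).symm
  rw [hLt] at heq0
  have h2 : t/2 * hnu (ν+1) (t^2/4)
      = hnu ν (t^2/4) * (∑' k : ℕ, 2 * t / (z k ^ 2 + t ^ 2)) :=
    mul_left_cancel₀ (ne_of_gt hΓpos) (heq0.trans (mul_assoc _ _ _))
  -- Integral identity
  have hnn : ∀ (k : ℕ) (x : ℝ), 0 ≤ (1 - Real.cos (t*x)) * (z k * Real.exp (-z k * x)) := by
    intro k x
    have h1 := Real.cos_le_one (t*x)
    have h2 := hz k
    exact mul_nonneg (by linarith) (by positivity)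
  have hSsum : Summable (fun k : ℕ => t^2 / (z k ^ 2 + t ^ 2)) := by
    apply Summable.of_nonneg_of_le (fun k => by have := hz k; positivity) (fun k => ?_)
      ((hsum.mul_left (t^2)).congr fun k => (mul_one_div _ _))
    have := hz k
    gcongr
    nlinarith [sq_nonneg t]
  have hlint : ∀ k : ℕ,
      (∫⁻ x in Set.Ioi (0:ℝ), ‖(1 - Real.cos (t*x)) * (z k * Real.exp (-z k * x))‖ₑ)
        = ENNReal.ofReal (t^2/(z k ^ 2 + t ^ 2)) := by
    intro k
    have h1 : ∀ x : ℝ, (‖(1 - Real.cos (t*x)) * (z k * Real.exp (-z k * x))‖ₑ : ENNReal)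
        = ENNReal.ofReal ((1 - Real.cos (t*x)) * (z k * Real.exp (-z k * x))) :=
      fun x => Real.enorm_eq_ofReal (hnn k x)
    rw [lintegral_congr (fun x => h1 x),
      ← ofReal_integral_eq_lintegral_ofReal (integrableAux t (hz k)) (ae_of_all _ (hnn k)),
      integralAux t (hz k)]
  have hmeas : ∀ k : ℕ, AEStronglyMeasurable
      (fun x : ℝ => (1 - Real.cos (t*x)) * (z k * Real.exp (-z k * x)))
      (volume.restrict (Set.Ioi 0)) := by
    intro k
    exact ((continuous_const.sub (Real.continuous_cos.comp
      (continuous_const.mul continuous_id))).mul (continuous_const.mul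
      (Real.continuous_exp.comp (continuous_const.mul continuous_id)))).aestronglyMeasurable
  have hswap : (∫ x in Set.Ioi (0:ℝ),
        (1 - Real.cos (t * x)) * ∑' k : ℕ, z k * Real.exp (-z k * x))
      = ∑' k : ℕ, t^2 / (z k ^ 2 + t ^ 2) := by
    have hstep : (∫ x in Set.Ioi (0:ℝ),
          (1 - Real.cos (t * x)) * ∑' k : ℕ, z k * Real.exp (-z k * x))
        = ∫ x in Set.Ioi (0:ℝ), ∑' k : ℕ, (1 - Real.cos (t*x)) * (z k * Real.exp (-z k * x)) := by
      congr 1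
      funext x
      rw [tsum_mul_left]
    rw [hstep, integral_tsum hmeas (by
      rw [funext hlint, ← ENNReal.ofReal_tsum_of_nonneg
        (fun k => by have := hz k; positivity) hSsum]
      exact ENNReal.ofReal_ne_top)]
    exact tsum_congr fun k => integralAux t (hz k)
  rw [hswap]
  calc t^2/4 * hnu (ν+1) (t^2/4) = (t/2) * (t/2 * hnu (ν+1) (t^2/4)) := by ring
    _ = (t/2) * (hnu ν (t^2/4) * ∑' k : ℕ, 2 * t / (z k ^ 2 + t ^ 2)) := by rw [h2]
    _ = hnu ν (t^2/4) * ((t/2) * ∑' k : ℕ, 2 * t / (z k ^ 2 + t ^ 2)) := by ring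
    _ = hnu ν (t^2/4) * ∑' k : ℕ, t^2 / (z k ^ 2 + t ^ 2) := by
        rw [← tsum_mul_left]
        congr 1
        exact tsum_congr fun k => by ring
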